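/- Let a function a : [0,∞) → [0,∞) satisfy sup_{s,t>0} |a(s+t) − √(a²(s) + a²(t))| < ∞ and be bounded on [0,t] for some t > 0. Then the limit lim_{t→∞} (a(t)/√t) exists in [0,∞). -/

import Mathlib

open Filter Topology


lemma growth (a : ℝ → ℝ) (C : ℝ) (hC : 0 ≤ C)
    (hdouble : ∀ t : ℝ, 0 < t → a (2*t) ≤ Real.sqrt 2 * a t + C)
    (t0 : ℝ) (ht0 : 0 < t0) (M : ℝ) (hM0 : 0 ≤ M)
    (hM : ∀ s ∈ Set.Icc (0:ℝ) t0, a s ≤ M) :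
    ∃ K : ℝ, 0 ≤ K ∧ ∀ u : ℝ, t0 ≤ u → a u ≤ K * Real.sqrt u := by
  set M1 : ℝ := Real.sqrt 2 * M + C with hM1
  have h2 : (1:ℝ) ≤ Real.sqrt 2 := by
    rw [show (1:ℝ) = Real.sqrt 1 by simp]
    exact Real.sqrt_le_sqrt (by norm_num)
  have hM10 : 0 ≤ M1 := by positivity
  have base : ∀ u : ℝ, t0 ≤ u → u ≤ 2 * t0 → a u ≤ M1 := by
    intro u h1 h2'
    have hu2 : u / 2 ∈ Set.Icc (0:ℝ) t0 := by
      constructor <;> nlinarith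
    have hd := hdouble (u/2) (by nlinarith)
    rw [show 2 * (u/2) = u by ring] at hd
    have hm := hM (u/2) hu2
    have hs2 : (0:ℝ) ≤ Real.sqrt 2 := Real.sqrt_nonneg 2
    nlinarith
  have main : ∀ n : ℕ, ∀ u : ℝ, t0 ≤ u → u ≤ 2^(n+1) * t0 →
      a u + 3*C ≤ (Real.sqrt 2)^n * (M1 + 3*C) := by
    intro n
    induction n with
    | zero =>
      intro u h1 h2'
      norm_num at h2' ⊢
      linarith [base u h1 h2']
    | succ n ih =>
      intro u h1 hu
      rcases le_or_gt u (2^(n+1) * t0) with hle | hgt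
      · have := ih u h1 hle
        have h1' : (Real.sqrt 2)^n ≤ (Real.sqrt 2)^(n+1) :=
          pow_le_pow_right₀ h2 (by omega)
        nlinarith [pow_nonneg (Real.sqrt_nonneg 2) n]
      · have ht : t0 ≤ u / 2 := by
          have h21 : (2:ℝ) ≤ 2^(n+1) := by
            calc (2:ℝ) = 2^1 := by norm_num
            _ ≤ 2^(n+1) := pow_le_pow_right₀ (by norm_num) (by omega)
          nlinarith
        have hu2 : u / 2 ≤ 2^(n+1) * t0 := by
          rw [pow_succ] at hu; nlinarith
        have hih := ih (u/2) ht hu2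
        have hd := hdouble (u/2) (by nlinarith)
        rw [show 2 * (u/2) = u by ring] at hd
        have hs2 : (0:ℝ) ≤ Real.sqrt 2 := Real.sqrt_nonneg 2
        have hsq : Real.sqrt 2 * Real.sqrt 2 = 2 := Real.mul_self_sqrt (by norm_num)
        have h32 : 4 ≤ 3 * Real.sqrt 2 := by nlinarith
        set P : ℝ := (Real.sqrt 2)^n * (M1 + 3*C) with hP
        have h4 : a (u/2) ≤ P - 3*C := by linarith
        have h5 : Real.sqrt 2 * a (u/2) ≤ Real.sqrt 2 * (P - 3*C) :=
          mul_le_mul_of_nonneg_left h4 hs2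
        have hrw : (Real.sqrt 2)^(n+1) * (M1 + 3*C) = Real.sqrt 2 * P := by
          rw [hP]; ring
        rw [hrw]
        linarith [mul_le_mul_of_nonneg_right h32 hC]
  refine ⟨(M1 + 3*C) / Real.sqrt t0, by positivity, ?_⟩
  intro u hu
  have hex : ∃ n : ℕ, u ≤ 2^(n+1) * t0 := by
    obtain ⟨n, hn⟩ := pow_unbounded_of_one_lt (u / t0) (by norm_num : (1:ℝ) < 2)
    exact ⟨n, by rw [pow_succ]; nlinarith [(div_le_iff₀ ht0).mp hn.le]⟩
  set n := Nat.find hex with hn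
  have hup : u ≤ 2^(n+1) * t0 := Nat.find_spec hex
  have hlow : 2^n * t0 ≤ u := by
    rcases Nat.eq_zero_or_pos n with h0 | hpos
    · rw [h0]; simpa using hu
    · have hmin := Nat.find_min hex (m := n - 1) (by omega)
      push_neg at hmin
      have : 2^(n-1+1) * t0 < u := hmin
      rw [show n - 1 + 1 = n by omega] at this
      exact this.le
  have key := main n u hu hup
  have hpow2 : (Real.sqrt 2)^n ≤ Real.sqrt (u / t0) := by
    rw [Real.le_sqrt (pow_nonneg (Real.sqrt_nonneg 2) n)
      (div_nonneg (by linarith) ht0.le)]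
    rw [← pow_mul, mul_comm n 2, pow_mul, Real.sq_sqrt (by norm_num : (0:ℝ) ≤ 2)]
    rw [le_div_iff₀ ht0]
    linarith
  have hdiv : Real.sqrt (u / t0) = Real.sqrt u / Real.sqrt t0 :=
    Real.sqrt_div (by linarith) t0
  have h3 : a u ≤ (Real.sqrt 2)^n * (M1 + 3*C) := by linarith
  calc a u ≤ Real.sqrt (u / t0) * (M1 + 3*C) :=
        h3.trans (mul_le_mul_of_nonneg_right hpow2 (by linarith))
  _ = (M1 + 3*C) / Real.sqrt t0 * Real.sqrt u := by rw [hdiv]; ring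

lemma sqrt_two_pow (n : ℕ) : Real.sqrt ((2:ℝ)^n) = (Real.sqrt 2)^n := by
  induction n with
  | zero => simp
  | succ n ih => rw [pow_succ, pow_succ, Real.sqrt_mul (by positivity), ih]

section Key
variable (g : ℝ → ℝ) (t1 : ℝ) (ht1 : 1 ≤ t1)
  (Q : ℝ) (hQ : 0 ≤ Q) (D : ℝ) (hD : 0 ≤ D)
  (hg0 : ∀ u : ℝ, t1 ≤ u → 0 ≤ g u)
  (hlin : ∀ u : ℝ, t1 ≤ u → g u ≤ Q * u)
  (hNA : ∀ s t : ℝ, t1 ≤ s → t1 ≤ t → |g (s+t) - g s - g t| ≤ D * Real.sqrt (s+t))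

include ht1 hNA in
lemma dyadic1 : ∀ w : ℝ, t1 ≤ w → |g (2*w) / (2*w) - g w / w| ≤ D / Real.sqrt (2*w) := by
  intro w hw
  have hw0 : 0 < w := lt_of_lt_of_le one_pos (le_trans ht1 hw)
  have hna := hNA w w hw hw
  rw [show w + w = 2*w by ring] at hna
  have heq : g (2*w) / (2*w) - g w / w = (g (2*w) - 2 * g w) / (2*w) := by
    field_simp
  rw [heq, abs_div, abs_of_pos (by linarith : (0:ℝ) < 2*w)]
  have h1 : |g (2*w) - 2 * g w| ≤ D * Real.sqrt (2*w) := by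
    have : g (2*w) - 2*g w = g (2*w) - g w - g w := by ring
    rw [this]; exact hna
  have h2 : D * Real.sqrt (2*w) / (2*w) = D / Real.sqrt (2*w) := by
    rw [mul_div_assoc, Real.sqrt_div_self', mul_one_div]
  calc |g (2*w) - 2 * g w| / (2*w) ≤ D * Real.sqrt (2*w) / (2*w) :=
        div_le_div_of_nonneg_right h1 (by linarith)
  _ = D / Real.sqrt (2*w) := h2

include ht1 hD hNA in
lemma dyadicn : ∀ (u : ℝ), t1 ≤ u → ∀ n : ℕ,
    |g (2^n * u) / (2^n * u) - g u / u| ≤ 3 * D / Real.sqrt u := by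
  intro u hu
  have hu1 : 1 ≤ u := le_trans ht1 hu
  have hu0 : 0 < u := by linarith
  have hsu : 1 ≤ Real.sqrt u := Real.one_le_sqrt.mpr hu1
  have hs2 : (1:ℝ) ≤ Real.sqrt 2 := Real.one_le_sqrt.mpr (by norm_num)
  have h32 : 4 ≤ 3 * Real.sqrt 2 := by
    nlinarith [Real.mul_self_sqrt (by norm_num : (0:ℝ) ≤ 2)]
  set r : ℝ := (Real.sqrt 2)⁻¹ with hr
  have hr0 : 0 < r := by positivity
  have hr1 : r ≤ 1 := by
    rw [hr]; exact inv_le_one_of_one_le₀ hs2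
  have main : ∀ n : ℕ,
      |g (2^n * u) / (2^n * u) - g u / u| ≤ 3 * D / Real.sqrt u * (1 - r^n) := by
    intro n
    induction n with
    | zero => simp
    | succ n ih =>
      have hstep := dyadic1 g t1 ht1 D hNA (2^n * u)
        (le_trans hu (le_mul_of_one_le_left hu0.le (one_le_pow₀ (by norm_num))))
      rw [show 2 * (2^n * u) = 2^(n+1) * u by ring] at hstep
      have hsqrt : Real.sqrt (2^(n+1) * u) = (Real.sqrt 2)^(n+1) * Real.sqrt u := by
        rw [Real.sqrt_mul (by positivity), sqrt_two_pow]
      have hstep2 : D / Real.sqrt (2^(n+1) * u) = D / Real.sqrt u * r^(n+1) := by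
        have h2ne : Real.sqrt 2 ≠ 0 := by positivity
        have hune : Real.sqrt u ≠ 0 := by positivity
        rw [hsqrt, hr, inv_pow]
        field_simp
      rw [hstep2] at hstep
      have htri := abs_sub_le (g (2^(n+1) * u) / (2^(n+1) * u)) (g (2^n * u) / (2^n * u)) (g u / u)
      have hrn : (0:ℝ) ≤ r^n := by positivity
      have hDru : 0 ≤ D / Real.sqrt u := by positivity
      have hkey : D / Real.sqrt u * r^(n+1) + 3 * D / Real.sqrt u * (1 - r^n)
          ≤ 3 * D / Real.sqrt u * (1 - r^(n+1)) := by
        have hor : r^(n+1) = r^n * r := by ring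
        have h4r : 4 * r ≤ 3 := by
          rw [hr, inv_eq_one_div, mul_one_div, div_le_iff₀ (by positivity : (0:ℝ) < Real.sqrt 2)]
          linarith
        have expand : 3*D/Real.sqrt u*(1 - r^(n+1)) -
            (D/Real.sqrt u * r^(n+1) + 3*D/Real.sqrt u*(1-r^n))
            = (D/Real.sqrt u * r^n) * (3 - 4*r) := by rw [hor]; ring
        linarith [mul_nonneg (mul_nonneg hDru hrn) (by linarith : (0:ℝ) ≤ 3 - 4*r), expand]
      linarith
  intro n
  have := main n
  have : 3 * D / Real.sqrt u * (1 - r^n) ≤ 3 * D / Real.sqrt u * 1 := by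
    apply mul_le_mul_of_nonneg_left _ (by positivity)
    have : (0:ℝ) ≤ r^n := by positivity
    linarith
  linarith [main n]



include ht1 hD hNA in
lemma add_many : ∀ (N : ℕ) (t r : ℝ), t1 ≤ t → t1 ≤ r →
    |g (N*t + r) - N * g t - g r| ≤ N * D * Real.sqrt (N*t + r) := by
  intro N
  induction N with
  | zero => intro t r _ _; simp
  | succ N ih =>
    intro t r htt hrr
    have ht0 : 0 < t := lt_of_lt_of_le one_pos (le_trans ht1 htt)
    have hr0 : 0 < r := lt_of_lt_of_le one_pos (le_trans ht1 hrr)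
    have hNt : (0:ℝ) ≤ N * t := by positivity
    have h1 := hNA t (N*t + r) htt (by linarith)
    have h2 := ih t r htt hrr
    have hmono : Real.sqrt (N*t + r) ≤ Real.sqrt ((N+1)*t + r) :=
      Real.sqrt_le_sqrt (by nlinarith)
    have h2' : |g (N*t + r) - N * g t - g r| ≤ N * D * Real.sqrt ((N+1)*t + r) := by
      calc |g (N*t + r) - N * g t - g r| ≤ N * D * Real.sqrt (N*t + r) := h2
      _ ≤ N * D * Real.sqrt ((N+1)*t + r) := by
          apply mul_le_mul_of_nonneg_left hmono (by positivity)
    have heq : (↑(N+1) : ℝ)*t + r = t + (N*t + r) := by push_cast; ring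
    rw [heq]
    have htri : |g (t + (N*t + r)) - (↑(N+1):ℝ) * g t - g r| ≤
        |g (t + (N*t+r)) - g t - g (N*t+r)| + |g (N*t + r) - N * g t - g r| := by
      have hh : g (t + (N*t + r)) - (↑(N+1):ℝ) * g t - g r =
          (g (t + (N*t+r)) - g t - g (N*t+r)) + (g (N*t + r) - N * g t - g r) := by
        push_cast; ring
      rw [hh]; exact abs_add_le _ _
    have hfin : |g (t + (N*t+r)) - g t - g (N*t+r)| ≤ D * Real.sqrt (t + (N*t+r)) := h1
    have hcast : Real.sqrt (t + (N*t+r)) = Real.sqrt ((N+1)*t + r) := by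
      congr 1; push_cast; ring
    rw [hcast] at hfin
    have : (↑(N+1):ℝ) * D * Real.sqrt ((N+1)*t+r) =
        D * Real.sqrt ((N+1)*t+r) + N * D * Real.sqrt ((N+1)*t+r) := by push_cast; ring
    have hgoal : Real.sqrt (t + (N*t + r)) = Real.sqrt ((N+1)*t + r) := hcast
    calc |g (t + (N*t+r)) - (↑(N+1):ℝ) * g t - g r|
        ≤ |g (t + (N*t+r)) - g t - g (N*t+r)| + |g (N*t + r) - N * g t - g r| := htri
    _ ≤ D * Real.sqrt ((N+1)*t+r) + N * D * Real.sqrt ((N+1)*t+r) := by linarith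
    _ = (↑(N+1):ℝ) * D * Real.sqrt ((N+1)*t+r) := this.symm
    _ = (↑(N+1):ℝ) * D * Real.sqrt (t + (N*t+r)) := by rw [hgoal]

include ht1 hQ hD hg0 hlin hNA in
lemma compare : ∀ t s : ℝ, t1 ≤ t → 2*t ≤ s →
    |g s / s - g t / t| ≤ 4*Q*t/s + D * Real.sqrt s / t := by
  intro t s htt hts
  have ht0 : 0 < t := lt_of_lt_of_le one_pos (le_trans ht1 htt)
  have hs0 : 0 < s := by linarith
  set n : ℕ := ⌊s/t⌋₊ with hn
  have hn2 : 2 ≤ n := Nat.le_floor (by rw [le_div_iff₀ ht0]; push_cast; linarith)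
  have hfl : (n:ℝ) ≤ s/t := Nat.floor_le (by positivity)
  have hfl' : s/t < n+1 := Nat.lt_floor_add_one _
  have hnt : (n:ℝ) * t ≤ s := by rw [le_div_iff₀ ht0] at hfl; linarith [hfl]
  have hnt' : s < ((n:ℝ)+1) * t := by rw [div_lt_iff₀ ht0] at hfl'; linarith
  set N : ℕ := n - 1 with hN
  have hNn : (N:ℝ) = (n:ℝ) - 1 := by
    rw [hN]; push_cast [Nat.cast_sub (by omega : 1 ≤ n)]; ring
  set r : ℝ := s - N * t with hr
  have hrt : t ≤ r := by rw [hr, hNn]; nlinarith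
  have hr2t : r ≤ 2*t := by rw [hr, hNn]; nlinarith
  have hrr : t1 ≤ r := le_trans htt hrt
  have hB := add_many g t1 ht1 D hD hNA N t r htt hrr
  have hsr : (N:ℝ)*t + r = s := by rw [hr]; ring
  rw [hsr] at hB
  -- numerator estimate
  have hgr : g r ≤ Q * r := hlin r hrr
  have hgr0 : 0 ≤ g r := hg0 r hrr
  have hgt : g t ≤ Q * t := hlin t htt
  have hgt0 : 0 ≤ g t := hg0 t htt
  have hNs : (N:ℝ) * t ≤ s := by nlinarith [hrt]
  have hsqs : (0:ℝ) ≤ Real.sqrt s := Real.sqrt_nonneg s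
  set e : ℝ := g s - N * g t - g r with he
  have hnum : |t * g s - s * g t| ≤ 4*Q*t^2 + D * s * Real.sqrt s := by
    have hid : t * g s - s * g t = t * g r - r * g t + t * e := by
      rw [he, ← hsr]; ring
    have h1 : |t * g r - r * g t + t * e| ≤ |t * g r - r * g t| + |t * e| := abs_add_le _ _
    have h2 : |t * g r - r * g t| ≤ 4*Q*t^2 := by
      rw [abs_le]; constructor <;> nlinarith
    have h3 : |t * e| ≤ D * s * Real.sqrt s := by
      rw [abs_mul, abs_of_pos ht0]
      calc t * |e| ≤ t * ((N:ℝ) * D * Real.sqrt s) := by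
            apply mul_le_mul_of_nonneg_left hB ht0.le
      _ = ((N:ℝ)*t) * (D * Real.sqrt s) := by ring
      _ ≤ s * (D * Real.sqrt s) := by
            apply mul_le_mul_of_nonneg_right hNs (by positivity)
      _ = D * s * Real.sqrt s := by ring
    rw [hid]; linarith
  have hdiff : g s / s - g t / t = (t * g s - s * g t) / (s * t) := by
    field_simp
  rw [hdiff, abs_div, abs_of_pos (by positivity : (0:ℝ) < s * t)]
  have hfin : (4*Q*t^2 + D * s * Real.sqrt s) / (s*t) = 4*Q*t/s + D * Real.sqrt s / t := by
    field_simp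
  calc |t * g s - s * g t| / (s*t) ≤ (4*Q*t^2 + D * s * Real.sqrt s) / (s*t) :=
        div_le_div_of_nonneg_right hnum (by positivity)
  _ = 4*Q*t/s + D * Real.sqrt s / t := hfin

end Key

section Key2
variable (g : ℝ → ℝ) (t1 : ℝ) (ht1 : 1 ≤ t1)
  (Q : ℝ) (hQ : 0 ≤ Q) (D : ℝ) (hD : 0 ≤ D)
  (hdyadic : ∀ (u : ℝ), t1 ≤ u → ∀ n : ℕ,
    |g (2^n * u) / (2^n * u) - g u / u| ≤ 3 * D / Real.sqrt u)
  (hcompare : ∀ t s : ℝ, t1 ≤ t → 2*t ≤ s →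
    |g s / s - g t / t| ≤ 4*Q*t/s + D * Real.sqrt s / t)

include ht1 hQ hD hdyadic hcompare in
lemma pair : ∀ u v : ℝ, t1 ≤ u → t1 ≤ v →
    |g u / u - g v / v| ≤ 4*D/Real.sqrt u + 4*D/Real.sqrt v := by
  intro u v hu hv
  have hu1 : 1 ≤ u := le_trans ht1 hu
  have hv1 : 1 ≤ v := le_trans ht1 hv
  have hu0 : 0 < u := by linarith
  have hv0 : 0 < v := by linarith
  have hsu1 : 1 ≤ Real.sqrt u := Real.one_le_sqrt.mpr hu1
  have hsv1 : 1 ≤ Real.sqrt v := Real.one_le_sqrt.mpr hv1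
  have hsuu : Real.sqrt u ≤ u := by
    nlinarith [Real.mul_self_sqrt hu0.le]
  have hsvv : Real.sqrt v ≤ v := by
    nlinarith [Real.mul_self_sqrt hv0.le]
  apply le_of_forall_pos_le_add
  intro ε hε
  obtain ⟨n, hbig⟩ := pow_unbounded_of_one_lt
    (max (2*u) (max (2*v) (8*Q*(u+v)/ε))) (by norm_num : (1:ℝ) < 2)
  have h2u : 2*u ≤ 2^n := le_of_lt (lt_of_le_of_lt (le_max_left _ _) hbig)
  have h2v : 2*v ≤ 2^n := le_of_lt (lt_of_le_of_lt ((le_max_left _ _).trans (le_max_right _ _)) hbig)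
  have hQn : 8*Q*(u+v)/ε < 2^n := lt_of_le_of_lt ((le_max_right _ _).trans (le_max_right _ _)) hbig
  have hp0 : (0:ℝ) < 2^n := by positivity
  have hp1 : (1:ℝ) ≤ 2^n := one_le_pow₀ (by norm_num)
  -- error on Q terms
  have hQe : 4*Q*u/2^n + 4*Q*v/2^n ≤ ε := by
    rw [← add_div, div_le_iff₀ hp0]
    have : 8*Q*(u+v) < ε * 2^n := by
      rw [div_lt_iff₀ hε] at hQn; linarith [hQn]
    nlinarith
  -- dyadic comparisons
  have hAu := hdyadic u hu n
  have hAv := hdyadic v hv n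
  -- compare 2^n * u with (2^n)^2
  have hcu := hcompare (2^n * u) ((2^n : ℝ)^2) (le_trans hu (le_mul_of_one_le_left hu0.le hp1))
    (by nlinarith)
  have hcv := hcompare (2^n * v) ((2^n : ℝ)^2) (le_trans hv (le_mul_of_one_le_left hv0.le hp1))
    (by nlinarith)
  have hsq : Real.sqrt ((2^n : ℝ)^2) = 2^n := Real.sqrt_sq hp0.le
  rw [hsq] at hcu hcv
  have hcu' : |g ((2^n:ℝ)^2) / (2^n:ℝ)^2 - g (2^n * u) / (2^n * u)| ≤ 4*Q*u/2^n + D/u := by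
    have e1 : 4*Q*(2^n*u)/((2^n:ℝ)^2) = 4*Q*u/2^n := by
      field_simp
    have e2 : D * (2^n:ℝ) / (2^n * u) = D / u := by
      rw [mul_comm D ((2:ℝ)^n), mul_div_mul_left _ _ (ne_of_gt hp0)]
    rw [e1, e2] at hcu; exact hcu
  have hcv' : |g ((2^n:ℝ)^2) / (2^n:ℝ)^2 - g (2^n * v) / (2^n * v)| ≤ 4*Q*v/2^n + D/v := by
    have e1 : 4*Q*(2^n*v)/((2^n:ℝ)^2) = 4*Q*v/2^n := by
      field_simp
    have e2 : D * (2^n:ℝ) / (2^n * v) = D / v := by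
      rw [mul_comm D ((2:ℝ)^n), mul_div_mul_left _ _ (ne_of_gt hp0)]
    rw [e1, e2] at hcv; exact hcv
  -- triangle inequality
  have htri : |g u / u - g v / v| ≤
      |g (2^n * u) / (2^n * u) - g u / u| +
      |g ((2^n:ℝ)^2) / (2^n:ℝ)^2 - g (2^n * u) / (2^n * u)| +
      |g ((2^n:ℝ)^2) / (2^n:ℝ)^2 - g (2^n * v) / (2^n * v)| +
      |g (2^n * v) / (2^n * v) - g v / v| := by
    set A := g u / u
    set B := g (2^n * u) / (2^n * u)
    set E := g ((2^n:ℝ)^2) / (2^n:ℝ)^2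
    set F := g (2^n * v) / (2^n * v)
    set G := g v / v
    calc |A - G| = |(-(B - A)) + (-(E - B)) + (E - F) + (F - G)| := by ring_nf
    _ ≤ |(-(B - A)) + (-(E - B)) + (E - F)| + |F - G| := abs_add_le _ _
    _ ≤ |(-(B - A)) + (-(E - B))| + |E - F| + |F - G| := by
        linarith [abs_add_le ((-(B - A)) + (-(E - B))) (E - F)]
    _ ≤ |(-(B - A))| + |(-(E - B))| + |E - F| + |F - G| := by
        linarith [abs_add_le (-(B - A)) (-(E - B))]
    _ = |B - A| + |E - B| + |E - F| + |F - G| := by rw [abs_neg, abs_neg]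
  -- D/u ≤ D/√u
  have hDu : D/u ≤ D/Real.sqrt u := by
    apply div_le_div_of_nonneg_left hD (by positivity) hsuu
  have hDv : D/v ≤ D/Real.sqrt v := by
    apply div_le_div_of_nonneg_left hD (by positivity) hsvv
  have habs1 : |g (2^n * u) / (2^n * u) - g u / u| ≤ 3*D/Real.sqrt u := hAu
  have habs2 : |g (2^n * v) / (2^n * v) - g v / v| ≤ 3*D/Real.sqrt v := hAv
  calc |g u / u - g v / v| ≤ _ := htri
  _ ≤ 3*D/Real.sqrt u + (4*Q*u/2^n + D/u) + (4*Q*v/2^n + D/v) + 3*D/Real.sqrt v := by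
      linarith
  _ ≤ 4*D/Real.sqrt u + 4*D/Real.sqrt v + ε := by
      have e1 : 4*D/Real.sqrt u = 3*D/Real.sqrt u + D/Real.sqrt u := by ring
      have e2 : 4*D/Real.sqrt v = 3*D/Real.sqrt v + D/Real.sqrt v := by ring
      linarith

end Key2

section Key3
variable (g : ℝ → ℝ) (t1 : ℝ) (ht1 : 1 ≤ t1) (D : ℝ) (hD : 0 ≤ D)
  (hg0 : ∀ u : ℝ, t1 ≤ u → 0 ≤ g u)
  (hpair : ∀ u v : ℝ, t1 ≤ u → t1 ≤ v →
    |g u / u - g v / v| ≤ 4*D/Real.sqrt u + 4*D/Real.sqrt v)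

include ht1 hD hg0 hpair in
lemma conv : ∃ l : ℝ, 0 ≤ l ∧ Tendsto (fun t : ℝ => g t / t) atTop (𝓝 l) := by
  set x : ℕ → ℝ := fun k => g (t1 + k) / (t1 + k) with hx
  have hmem : ∀ k : ℕ, t1 ≤ t1 + k := fun k => by
    have : (0:ℝ) ≤ k := Nat.cast_nonneg k
    linarith
  have hxpos : ∀ k : ℕ, 0 ≤ x k := fun k => by
    apply div_nonneg (hg0 _ (hmem k))
    have : (0:ℝ) ≤ k := Nat.cast_nonneg k
    linarith
  -- small bound helper: if (c/ε)^2 < w then c/√w < ε  (for ε>0, c ≥ 0)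
  have hsmall : ∀ c ε w : ℝ, 0 < ε → 0 ≤ c → (c/ε)^2 < w → c / Real.sqrt w < ε := by
    intro c ε w hε hc hw
    have hw0 : 0 < w := lt_of_le_of_lt (by positivity) hw
    have hsw : c/ε < Real.sqrt w := by
      rw [show w = Real.sqrt w ^ 2 from (Real.sq_sqrt hw0.le).symm] at hw
      have := Real.sqrt_nonneg w
      nlinarith
    rw [div_lt_iff₀ (Real.sqrt_pos.mpr hw0)]
    rw [div_lt_iff₀ hε] at hsw
    linarith
  have hcauchy : CauchySeq x := by
    rw [Metric.cauchySeq_iff']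
    intro ε hε
    obtain ⟨N, hN⟩ := exists_nat_ge ((8*D/(ε/2))^2 + 1)
    refine ⟨N, fun n hn => ?_⟩
    have hNe : (8*D/(ε/2))^2 < t1 + N := by
      have : (0:ℝ) ≤ (8*D/(ε/2))^2 := sq_nonneg _
      linarith
    have h8 : 8*D/Real.sqrt (t1 + N) < ε/2 := hsmall (8*D) (ε/2) _ (by linarith) (by linarith) hNe
    have hmono : Real.sqrt (t1 + N) ≤ Real.sqrt (t1 + n) := by
      apply Real.sqrt_le_sqrt
      have : (N:ℝ) ≤ n := Nat.cast_le.mpr hn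
      linarith
    have hp := hpair (t1 + n) (t1 + N) (hmem n) (hmem N)
    rw [Real.dist_eq]
    have hsN : 0 < Real.sqrt (t1 + N) := Real.sqrt_pos.mpr (by positivity)
    have h1 : 4*D/Real.sqrt (t1+n) ≤ 4*D/Real.sqrt (t1+N) :=
      div_le_div_of_nonneg_left (by linarith) hsN hmono
    have e1 : 8*D/Real.sqrt (t1+N) = 4*D/Real.sqrt (t1+N) + 4*D/Real.sqrt (t1+N) := by ring
    calc |x n - x N| ≤ 4*D/Real.sqrt (t1+n) + 4*D/Real.sqrt (t1+N) := hp
    _ ≤ 8*D/Real.sqrt (t1+N) := by rw [e1]; linarith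
    _ < ε/2 := h8
    _ < ε := by linarith
  obtain ⟨l, hl⟩ := cauchySeq_tendsto_of_complete hcauchy
  refine ⟨l, ge_of_tendsto' hl hxpos, ?_⟩
  rw [Metric.tendsto_atTop]
  intro ε hε
  -- choose k with both dist (x k) l < ε/3 and 4D/√(t1+k) < ε/3
  obtain ⟨N2, hN2⟩ := exists_nat_ge ((12*D/(ε/3))^2 + 1)
  obtain ⟨N1, hN1⟩ := (Metric.tendsto_atTop.mp hl) (ε/3) (by linarith)
  set k := max N1 N2 with hk
  have hk2 : (12*D/(ε/3))^2 < t1 + k := by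
    have h1 : (N2:ℝ) ≤ k := Nat.cast_le.mpr (le_max_right _ _)
    linarith
  have hdk : 4*D/Real.sqrt (t1 + k) < ε/3 := by
    have := hsmall (12*D) (ε/3) (t1 + k) (by linarith) (by linarith) hk2
    have hsk : 0 < Real.sqrt (t1 + k) := Real.sqrt_pos.mpr (by positivity)
    have : 4*D/Real.sqrt (t1+k) ≤ 12*D/Real.sqrt (t1+k) := by
      apply div_le_div_of_nonneg_right (by linarith) hsk.le
    linarith [hsmall (12*D) (ε/3) (t1 + k) (by linarith) (by linarith) hk2]
  have hxl : dist (x k) l < ε/3 := hN1 k (le_max_left _ _)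
  refine ⟨max t1 ((12*D/(ε/3))^2 + 1), fun t ht => ?_⟩
  have htt1 : t1 ≤ t := le_trans (le_max_left _ _) ht
  have ht2 : (12*D/(ε/3))^2 < t := lt_of_lt_of_le (by linarith [le_max_right t1 ((12*D/(ε/3))^2 + 1)]) ht
  have hdt : 4*D/Real.sqrt t < ε/3 := by
    have := hsmall (12*D) (ε/3) t (by linarith) (by linarith) ht2
    have hst : 0 < Real.sqrt t := Real.sqrt_pos.mpr (by linarith)
    have h4 : 4*D/Real.sqrt t ≤ 12*D/Real.sqrt t :=
      div_le_div_of_nonneg_right (by linarith) hst.le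
    linarith
  have hp := hpair t (t1 + k) htt1 (hmem k)
  rw [Real.dist_eq] at hxl ⊢
  calc |g t / t - l| ≤ |g t / t - x k| + |x k - l| := abs_sub_le _ _ _
  _ ≤ (4*D/Real.sqrt t + 4*D/Real.sqrt (t1+k)) + |x k - l| := by
      have : |g t / t - x k| ≤ 4*D/Real.sqrt t + 4*D/Real.sqrt (t1+k) := hp
      linarith
  _ < ε/3 + ε/3 + ε/3 := by linarith
  _ = ε := by ring

end Key3

/-- Lemma 7.9: if a nonnegative function `a : [0,∞) → [0,∞)` satisfies
`sup_{s,t>0} |a(s+t) - √(a²(s) + a²(t))| < ∞` and is bounded on `[0, t]` for some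
`t > 0`, then `lim_{t→∞} a(t)/√t` exists in `[0, ∞)`. -/
theorem limit_of_almost_additive_sqrt_continuous (a : ℝ → ℝ)
    (ha : ∀ t : ℝ, 0 ≤ t → 0 ≤ a t)
    (h : ∃ C : ℝ, ∀ s t : ℝ, 0 < s → 0 < t →
      |a (s + t) - Real.sqrt ((a s) ^ 2 + (a t) ^ 2)| ≤ C)
    (hbdd : ∃ t : ℝ, 0 < t ∧ ∃ M : ℝ, ∀ s ∈ Set.Icc (0:ℝ) t, a s ≤ M) :
    ∃ L : ℝ, 0 ≤ L ∧
      Tendsto (fun t : ℝ => a t / Real.sqrt t) atTop (𝓝 L) := by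
  obtain ⟨C, hC⟩ := h
  obtain ⟨t0, ht0, M, hM⟩ := hbdd
  have hC0 : 0 ≤ C := le_trans (abs_nonneg _) (hC 1 1 one_pos one_pos)
  have hM0 : 0 ≤ M := le_trans (ha t0 ht0.le) (hM t0 ⟨ht0.le, le_refl _⟩)
  -- doubling
  have hdouble : ∀ t : ℝ, 0 < t → a (2*t) ≤ Real.sqrt 2 * a t + C := by
    intro t ht
    have h1 := hC t t ht ht
    have h2 : Real.sqrt ((a t)^2 + (a t)^2) = Real.sqrt 2 * a t := by
      rw [show (a t)^2 + (a t)^2 = 2 * (a t)^2 by ring,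
        Real.sqrt_mul (by norm_num), Real.sqrt_sq (ha t ht.le)]
    rw [h2] at h1
    rw [show 2*t = t + t by ring]
    linarith [(abs_le.mp h1).2]
  -- K√u growth bound
  obtain ⟨K, hK0, hKa⟩ := growth a C hC0 hdouble t0 ht0 M hM0 hM
  set t1 : ℝ := max t0 1 with ht1def
  have ht1 : (1:ℝ) ≤ t1 := le_max_right _ _
  have ht1t0 : t0 ≤ t1 := le_max_left _ _
  set g : ℝ → ℝ := fun t => (a t)^2 with hgdef
  set Q : ℝ := K^2 with hQdef
  set D : ℝ := 2*C*K + C^2 with hDdef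
  have hQ0 : 0 ≤ Q := sq_nonneg K
  have hD0 : 0 ≤ D := by rw [hDdef]; positivity
  have hg0 : ∀ u : ℝ, t1 ≤ u → 0 ≤ g u := fun u _ => sq_nonneg _
  have hlin : ∀ u : ℝ, t1 ≤ u → g u ≤ Q * u := by
    intro u hu
    have hu0 : t0 ≤ u := le_trans ht1t0 hu
    have h1 : a u ≤ K * Real.sqrt u := hKa u hu0
    have h2 : (a u)^2 ≤ (K * Real.sqrt u)^2 := by
      apply pow_le_pow_left₀ (ha u (by linarith)) h1
    calc g u ≤ (K * Real.sqrt u)^2 := h2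
    _ = K^2 * (Real.sqrt u)^2 := by ring
    _ = Q * u := by rw [Real.sq_sqrt (by linarith : (0:ℝ) ≤ u), hQdef]
  have hNA : ∀ s t : ℝ, t1 ≤ s → t1 ≤ t →
      |g (s+t) - g s - g t| ≤ D * Real.sqrt (s+t) := by
    intro s t hs ht
    have hs1 : (1:ℝ) ≤ s := le_trans ht1 hs
    have ht1' : (1:ℝ) ≤ t := le_trans ht1 ht
    have hs0 : 0 < s := by linarith
    have htt0 : 0 < t := by linarith
    set x : ℝ := a (s+t) with hxdef
    set y : ℝ := Real.sqrt ((a s)^2 + (a t)^2) with hydef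
    have hx0 : 0 ≤ x := ha (s+t) (by linarith)
    have hy0 : 0 ≤ y := Real.sqrt_nonneg _
    have habs : |x - y| ≤ C := hC s t hs0 htt0
    have hysq : y^2 = (a s)^2 + (a t)^2 := Real.sq_sqrt (by positivity)
    have hyK : y ≤ K * Real.sqrt (s+t) := by
      have e1 : (a s)^2 ≤ Q * s := hlin s hs
      have e2 : (a t)^2 ≤ Q * t := hlin t ht
      calc y ≤ Real.sqrt (Q * (s+t)) := Real.sqrt_le_sqrt (by rw [hQdef] at e1 e2 ⊢; nlinarith)
      _ = K * Real.sqrt (s+t) := by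
          rw [hQdef, Real.sqrt_mul (sq_nonneg K), Real.sqrt_sq hK0]
    have hxy : x ≤ y + C := by linarith [(abs_le.mp habs).2]
    have key : |x^2 - y^2| ≤ C * (x + y) := by
      rw [show x^2 - y^2 = (x - y)*(x + y) by ring, abs_mul,
        abs_of_nonneg (add_nonneg hx0 hy0)]
      exact mul_le_mul_of_nonneg_right habs (add_nonneg hx0 hy0)
    have hsq1 : (1:ℝ) ≤ Real.sqrt (s+t) := Real.one_le_sqrt.mpr (by linarith)
    have hgoal : g (s+t) - g s - g t = x^2 - y^2 := by
      rw [hgdef]; simp only; rw [hysq, hxdef]; ring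
    rw [hgoal]
    calc |x^2 - y^2| ≤ C * (x + y) := key
    _ ≤ C * (2*y + C) := by
        apply mul_le_mul_of_nonneg_left (by linarith) hC0
    _ = 2*C*y + C^2 := by ring
    _ ≤ 2*C*(K * Real.sqrt (s+t)) + C^2 * Real.sqrt (s+t) := by
        have e1 : 2*C*y ≤ 2*C*(K * Real.sqrt (s+t)) :=
          mul_le_mul_of_nonneg_left hyK (by linarith)
        have e2 : C^2 ≤ C^2 * Real.sqrt (s+t) :=
          le_mul_of_one_le_right (sq_nonneg C) hsq1
        linarith
    _ = D * Real.sqrt (s+t) := by rw [hDdef]; ring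
  -- assemble
  have hdy := dyadicn g t1 ht1 D hD0 hNA
  have hcmp := compare g t1 ht1 Q hQ0 D hD0 hg0 hlin hNA
  have hpr := pair g t1 ht1 Q hQ0 D hD0 hdy hcmp
  obtain ⟨l, hl0, hlim⟩ := conv g t1 ht1 D hD0 hg0 hpr
  refine ⟨Real.sqrt l, Real.sqrt_nonneg l, ?_⟩
  have h1 : Tendsto (fun t : ℝ => Real.sqrt (g t / t)) atTop (𝓝 (Real.sqrt l)) :=
    (Real.continuous_sqrt.tendsto l).comp hlim
  apply Tendsto.congr' _ h1
  filter_upwards [eventually_ge_atTop (1:ℝ)] with t ht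
  have ht0' : (0:ℝ) ≤ t := by linarith
  rw [hgdef]
  simp only
  rw [Real.sqrt_div (sq_nonneg (a t)) t, Real.sqrt_sq (ha t ht0')]
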